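/- Let S be a subset of (Fin n)^d and let k ≥ 1. Then the number of k-multiplexes over S is at most ((k·n)! / (k!)^n)^d. -/

import Mathlib

/-- The left-to-right product `((a₁ * a₂) * ⋯) * a_m` of a list of elements of `Fin n`
under a binary operation `op`, where `e` is returned for the empty list
(all uses below have nonempty lists). -/
def leftProd {n : ℕ} (op : Fin n → Fin n → Fin n) (e : Fin n) : List (Fin n) → Fin n
  | [] => e
  | a :: l => l.foldl op a

/-- `SdSet op e d` is the support `S_d(G)` of the `d`-dimensional MDS code
`M(G^[d-1])` of the `(d-1)`-iterated quasigroup `G` with operation `op`: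
the set of `(x₁, …, x_d)` with `((…((x₁ * x₂) * x₃) * …) * x_d = e`,
where `e` plays the role of the fixed element `1` of `Fin n`. -/
def SdSet {n : ℕ} (op : Fin n → Fin n → Fin n) (e : Fin n) (d : ℕ) :
    Set (Fin d → Fin n) :=
  {x | leftProd op e (List.ofFn x) = e}

/-- `IsKMultiplex S k K` says that the multiset `K` is a `k`-multiplex over
`S ⊆ (Fin n)^d`: it consists of `k·n` elements of `S` and, for every coordinate `j`
and every symbol `v`, exactly `k` elements of `K` (counted with multiplicity) have
`j`-th coordinate equal to `v`. -/
def IsKMultiplex {n d : ℕ} (S : Set (Fin d → Fin n)) (k : ℕ)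
    (K : Multiset (Fin d → Fin n)) : Prop :=
  Multiset.card K = k * n ∧ (∀ x ∈ K, x ∈ S) ∧
    ∀ (j : Fin d) (v : Fin n), Multiset.card (K.filter (fun x => x j = v)) = k

/-- `Perk S k` is the number of `k`-multiplexes over `S` (the `k`-multipermanent). -/
noncomputable def Perk {n d : ℕ} (S : Set (Fin d → Fin n)) (k : ℕ) : ℕ :=
  Set.ncard {K : Multiset (Fin d → Fin n) | IsKMultiplex S k K}

/-- `perk S k` is the number of `k`-plexes in `S` (`k`-multiplexes without repeated
elements), i.e. the `k`-permanent. -/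
noncomputable def perk {n d : ℕ} (S : Set (Fin d → Fin n)) (k : ℕ) : ℕ :=
  Set.ncard {K : Multiset (Fin d → Fin n) | K.Nodup ∧ IsKMultiplex S k K}



section Aux

lemma card_filter_univ_eq_countP_ofFn {N : ℕ} {α : Type*} (f : Fin N → α)
    (p : α → Prop) [DecidablePred p] :
    (Finset.univ.filter (fun i => p (f i))).card
      = (List.ofFn f).countP (fun a => decide (p a)) := by
  rw [List.ofFn_eq_map, List.countP_map, List.countP_eq_length_filter, Fin.univ_def]
  rfl

lemma ofFn_get_cast {α : Type*} {l : List α} {N : ℕ} (h : N = l.length) :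
    List.ofFn (fun i : Fin N => l.get (Fin.cast h i)) = l := by
  subst h; simp

/-- Balanced functions: each value attained exactly `k` times. -/
def Bal (n k : ℕ) : Type :=
  {f : Fin (k * n) → Fin n // ∀ v, (Finset.univ.filter (fun i => f i = v)).card = k}

noncomputable instance (n k : ℕ) : Fintype (Bal n k) := by unfold Bal; infer_instance

variable {n k : ℕ}

noncomputable def fibIso (f : Bal n k) (v : Fin n) :
    Fin k ≃o {x // x ∈ Finset.univ.filter (fun j => f.1 j = v)} :=
  (Finset.univ.filter (fun j => f.1 j = v)).orderIsoOfFin (f.2 v)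

noncomputable def balPsi (f : Bal n k) : Fin n × Fin k → Fin (k * n) :=
  fun p => (fibIso f p.1 p.2 : Fin (k * n))

lemma balPsi_mem (f : Bal n k) (p : Fin n × Fin k) : f.1 (balPsi f p) = p.1 := by
  have h := (fibIso f p.1 p.2).2
  exact (Finset.mem_filter.mp h).2

lemma balPsi_inj (f : Bal n k) : Function.Injective (balPsi f) := by
  intro p q h
  have h1 : p.1 = q.1 := by rw [← balPsi_mem f p, ← balPsi_mem f q, h]
  obtain ⟨v, m⟩ := p; obtain ⟨v', m'⟩ := q
  simp only at h1; subst h1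
  have h2 : fibIso f v m = fibIso f v m' := Subtype.ext h
  have : m = m' := (fibIso f v).injective h2
  rw [this]

lemma balPsi_bij (f : Bal n k) : Function.Bijective (balPsi f) :=
  (Fintype.bijective_iff_injective_and_card _).2 ⟨balPsi_inj f, by simp [mul_comm]⟩

noncomputable def balE (f : Bal n k) : Fin n × Fin k ≃ Fin (k * n) :=
  Equiv.ofBijective _ (balPsi_bij f)

noncomputable def Psi (x : Bal n k × (Fin n → Equiv.Perm (Fin k))) :
    (Fin n × Fin k) ≃ Fin (k * n) :=
  (Equiv.prodCongrRight x.2).trans (balE x.1)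

lemma Psi_apply (f : Bal n k) (σ : Fin n → Equiv.Perm (Fin k)) (p : Fin n × Fin k) :
    Psi (f, σ) p = balPsi f (p.1, σ p.1 p.2) := rfl

lemma Psi_fst (f : Bal n k) (σ : Fin n → Equiv.Perm (Fin k)) (i : Fin (k * n)) :
    f.1 i = ((Psi (f, σ)).symm i).1 := by
  conv_lhs => rw [← (Psi (f, σ)).apply_symm_apply i]
  rw [Psi_apply, balPsi_mem]

lemma Psi_inj : Function.Injective (Psi (n := n) (k := k)) := by
  rintro ⟨f, σ⟩ ⟨f', σ'⟩ h
  have hf : f = f' := by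
    apply Subtype.ext; funext i
    rw [Psi_fst f σ i, Psi_fst f' σ' i, h]
  subst hf
  have hσ : σ = σ' := by
    funext v; apply Equiv.ext; intro m
    have h2 : Psi (f, σ) (v, m) = Psi (f, σ') (v, m) := by rw [h]
    rw [Psi_apply, Psi_apply] at h2
    have := balPsi_inj f h2
    exact (Prod.mk.injEq _ _ _ _ ▸ this).2
  rw [hσ]

lemma bal_card_mul (n k : ℕ) :
    Fintype.card (Bal n k) * k.factorial ^ n ≤ (k * n).factorial := by
  have h := Fintype.card_le_of_injective _ (Psi_inj (n := n) (k := k))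
  rw [Fintype.card_prod] at h
  have h1 : Fintype.card (Fin n → Equiv.Perm (Fin k)) = k.factorial ^ n := by
    simp [Fintype.card_fun, Fintype.card_perm]
  have h2 : Fintype.card ((Fin n × Fin k) ≃ Fin (k * n)) = (k * n).factorial := by
    rw [Fintype.card_equiv (finProdFinEquiv.trans (finCongr (mul_comm n k)))]
    simp [mul_comm]
  rw [h1, h2] at h
  exact h

end Aux

theorem multiplex_count_upper_bound' {n d : ℕ} (S : Set (Fin d → Fin n)) (k : ℕ)
    (hk : 1 ≤ k) :
    (Set.ncard {K : Multiset (Fin d → Fin n) | (Multiset.card K = k * n ∧ (∀ x ∈ K, x ∈ S) ∧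
      ∀ (j : Fin d) (v : Fin n), Multiset.card (K.filter (fun x => x j = v)) = k)} : ℝ)
      ≤ (((k * n).factorial : ℝ) / (k.factorial : ℝ) ^ n) ^ d := by
  classical
  set T := {K : Multiset (Fin d → Fin n) | (Multiset.card K = k * n ∧ (∀ x ∈ K, x ∈ S) ∧
      ∀ (j : Fin d) (v : Fin n), Multiset.card (K.filter (fun x => x j = v)) = k)} with hT
  -- step 1 : injection into Fin d → Bal n k
  have hlen : ∀ K : T, k * n = (K.1.toList).length := by
    rintro ⟨K, hK⟩
    rw [Multiset.length_toList, hK.1]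
  let Φ : T → (Fin d → Bal n k) := fun K j =>
    ⟨fun i => K.1.toList.get (Fin.cast (hlen K) i) j, by
      intro v
      rw [card_filter_univ_eq_countP_ofFn (fun i => K.1.toList.get (Fin.cast (hlen K) i))
        (fun x => x j = v), ofFn_get_cast (hlen K)]
      have := K.2.2.2 j v
      rw [← Multiset.coe_toList K.1, Multiset.filter_coe, Multiset.coe_card] at this
      rw [← this, List.countP_eq_length_filter]⟩
  have hΦ : Function.Injective Φ := by
    intro K K' h
    have hlist : K.1.toList = K'.1.toList := by
      apply List.ext_get
      · rw [← hlen K, ← hlen K']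
      · intro m h1 h2
        funext j
        have := congrFun (congrArg Subtype.val (congrFun h j)) ⟨m, by have := hlen K; omega⟩
        simpa [Φ] using this
    apply Subtype.ext
    rw [← Multiset.coe_toList K.1, ← Multiset.coe_toList K'.1, hlist]
  have hfin : Finite T := Finite.of_injective Φ hΦ
  have hcard : Set.ncard T ≤ Fintype.card (Bal n k) ^ d := by
    rw [← Nat.card_coe_set_eq]
    calc Nat.card T ≤ Nat.card (Fin d → Bal n k) := Nat.card_le_card_of_injective Φ hΦ
      _ = Fintype.card (Bal n k) ^ d := by
          rw [Nat.card_eq_fintype_card, Fintype.card_fun, Fintype.card_fin]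
  -- step 3 : real arithmetic
  have hb := bal_card_mul n k
  have hkpos : (0:ℝ) < (k.factorial : ℝ) ^ n := by positivity
  have hB : (Fintype.card (Bal n k) : ℝ) ≤ ((k*n).factorial : ℝ) / (k.factorial : ℝ) ^ n := by
    rw [le_div_iff₀ hkpos]
    calc (Fintype.card (Bal n k) : ℝ) * (k.factorial : ℝ) ^ n
        = ((Fintype.card (Bal n k) * k.factorial ^ n : ℕ) : ℝ) := by push_cast; ring
      _ ≤ (((k*n).factorial : ℕ) : ℝ) := by exact_mod_cast hb
  calc (Set.ncard T : ℝ) ≤ ((Fintype.card (Bal n k) ^ d : ℕ) : ℝ) := by exact_mod_cast hcard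
    _ = ((Fintype.card (Bal n k) : ℝ)) ^ d := by push_cast; ring
    _ ≤ (((k * n).factorial : ℝ) / (k.factorial : ℝ) ^ n) ^ d := by
        apply pow_le_pow_left₀ (by positivity) hB


/-- For any subset `S` of `(Fin n)^d` and `k ≥ 1`, the number of
`k`-multiplexes over `S` is at most `((kn)!/(k!)^n)^d`. -/
theorem multiplex_count_upper_bound {n d : ℕ} (S : Set (Fin d → Fin n)) (k : ℕ)
    (hk : 1 ≤ k) :
    (Perk S k : ℝ) ≤ (((k * n).factorial : ℝ) / (k.factorial : ℝ) ^ n) ^ d :=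
  multiplex_count_upper_bound' S k hk
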